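/- (The Dirac algebra is the complexification of the spacetime algebra.) The complexification ℂ ⊗_ℝ Cℓ(1,3) of the real spacetime algebra Cℓ(1,3) is isomorphic as a ℂ-algebra to the algebra of 4×4 complex matrices: ℂ ⊗_ℝ Cℓ(1,3) ≃ₐ[ℂ] Matrix (Fin 4) (Fin 4) ℂ. -/

import Mathlib

open scoped TensorProduct

set_option maxHeartbeats 1000000

noncomputable def Q13 : QuadraticForm ℝ (Fin 4 → ℝ) :=
  QuadraticMap.weightedSumSquares ℝ ![(1 : ℝ), -1, -1, -1]

namespace DiracAux
open Complex Matrix CliffordAlgebra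

local notation "Cl" => CliffordAlgebra Q13

/-! ### the linear map into gamma matrices -/

noncomputable def Lmap : (Fin 4 → ℝ) →ₗ[ℝ] Matrix (Fin 4) (Fin 4) ℂ where
  toFun v := !![(v 0 : ℂ), 0, (v 3 : ℂ), (v 1 : ℂ) - I * v 2;
                0, (v 0:ℂ), (v 1:ℂ) + I * v 2, -(v 3:ℂ);
                -(v 3:ℂ), -(v 1:ℂ) + I * v 2, -(v 0:ℂ), 0;
                -(v 1:ℂ) - I * v 2, (v 3:ℂ), 0, -(v 0:ℂ)]
  map_add' x y := by
    ext i j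
    fin_cases i <;> fin_cases j <;>
      simp [Matrix.vecHead, Matrix.vecTail] <;> push_cast <;> ring
  map_smul' c x := by
    ext i j
    fin_cases i <;> fin_cases j <;>
      simp [Matrix.vecHead, Matrix.vecTail, Complex.real_smul] <;> push_cast <;> ring

theorem Lmap_sq (v : Fin 4 → ℝ) :
    Lmap v * Lmap v = algebraMap ℝ (Matrix (Fin 4) (Fin 4) ℂ) (Q13 v) := by
  have hq : Q13 v = v 0 * v 0 - v 1 * v 1 - v 2 * v 2 - v 3 * v 3 := by
    simp [Q13, QuadraticMap.weightedSumSquares_apply, Fin.sum_univ_four]; ring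
  rw [hq]
  ext i j
  fin_cases i <;> fin_cases j <;>
    simp [Lmap, Matrix.mul_apply, Fin.sum_univ_four, Matrix.vecHead, Matrix.vecTail,
      Matrix.algebraMap_matrix_apply] <;>
    ring_nf <;> simp [Complex.I_sq] <;> ring

noncomputable def ψ : Cl →ₐ[ℝ] Matrix (Fin 4) (Fin 4) ℂ :=
  CliffordAlgebra.lift Q13 ⟨Lmap, Lmap_sq⟩

/-! ### generators of the Clifford algebra -/

noncomputable def e (i : Fin 4) : Cl := ι Q13 (Pi.single i 1)

theorem e_def (i : Fin 4) : e i = ι Q13 (Pi.single i 1) := rfl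

theorem Q13_single (i : Fin 4) : Q13 (Pi.single i 1) = ![(1:ℝ),-1,-1,-1] i := by
  fin_cases i <;>
    simp [Q13, QuadraticMap.weightedSumSquares_apply, Fin.sum_univ_four, Pi.single_apply]

theorem sq0 : e 0 * e 0 = 1 := by rw [e_def, ι_sq_scalar, Q13_single]; simp
theorem sq1 : e 1 * e 1 = -1 := by rw [e_def, ι_sq_scalar, Q13_single]; simp
theorem sq2 : e 2 * e 2 = -1 := by rw [e_def, ι_sq_scalar, Q13_single]; simp
theorem sq3 : e 3 * e 3 = -1 := by rw [e_def, ι_sq_scalar, Q13_single]; simp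

theorem e_swap (i j : Fin 4) (h : i ≠ j) : e j * e i = -(e i * e j) := by
  refine ι_mul_ι_comm_of_isOrtho ?_
  rw [QuadraticMap.isOrtho_def]
  fin_cases i <;> fin_cases j <;>
    simp_all [Q13, QuadraticMap.weightedSumSquares_apply, Fin.sum_univ_four, Pi.single_apply]

theorem sw10 : e 1 * e 0 = -(e 0 * e 1) := e_swap 0 1 (by decide)
theorem sw10' (x : Cl) : e 1 * (e 0 * x) = -(e 0 * (e 1 * x)) := by
  rw [← mul_assoc, sw10, neg_mul, mul_assoc]
theorem sw20 : e 2 * e 0 = -(e 0 * e 2) := e_swap 0 2 (by decide)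
theorem sw20' (x : Cl) : e 2 * (e 0 * x) = -(e 0 * (e 2 * x)) := by
  rw [← mul_assoc, sw20, neg_mul, mul_assoc]
theorem sw21 : e 2 * e 1 = -(e 1 * e 2) := e_swap 1 2 (by decide)
theorem sw21' (x : Cl) : e 2 * (e 1 * x) = -(e 1 * (e 2 * x)) := by
  rw [← mul_assoc, sw21, neg_mul, mul_assoc]
theorem sw30 : e 3 * e 0 = -(e 0 * e 3) := e_swap 0 3 (by decide)
theorem sw30' (x : Cl) : e 3 * (e 0 * x) = -(e 0 * (e 3 * x)) := by
  rw [← mul_assoc, sw30, neg_mul, mul_assoc]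
theorem sw31 : e 3 * e 1 = -(e 1 * e 3) := e_swap 1 3 (by decide)
theorem sw31' (x : Cl) : e 3 * (e 1 * x) = -(e 1 * (e 3 * x)) := by
  rw [← mul_assoc, sw31, neg_mul, mul_assoc]
theorem sw32 : e 3 * e 2 = -(e 2 * e 3) := e_swap 2 3 (by decide)
theorem sw32' (x : Cl) : e 3 * (e 2 * x) = -(e 2 * (e 3 * x)) := by
  rw [← mul_assoc, sw32, neg_mul, mul_assoc]
theorem sq0' (x : Cl) : e 0 * (e 0 * x) = x := by rw [← mul_assoc, sq0, one_mul]
theorem sq1' (x : Cl) : e 1 * (e 1 * x) = -x := by rw [← mul_assoc, sq1, neg_one_mul]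
theorem sq2' (x : Cl) : e 2 * (e 2 * x) = -x := by rw [← mul_assoc, sq2, neg_one_mul]
theorem sq3' (x : Cl) : e 3 * (e 3 * x) = -x := by rw [← mul_assoc, sq3, neg_one_mul]

/-! ### the 16 monomials span the Clifford algebra -/

noncomputable def g : Fin 16 → Cl := ![1, e 0, e 1, e 0 * e 1, e 2, e 0 * e 2, e 1 * e 2, e 0 * (e 1 * e 2), e 3, e 0 * e 3, e 1 * e 3, e 0 * (e 1 * e 3), e 2 * e 3, e 0 * (e 2 * e 3), e 1 * (e 2 * e 3), e 0 * (e 1 * (e 2 * e 3))]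

theorem gv0 : g 0 = 1 := rfl
theorem gv1 : g 1 = e 0 := rfl
theorem gv2 : g 2 = e 1 := rfl
theorem gv3 : g 3 = e 0 * e 1 := rfl
theorem gv4 : g 4 = e 2 := rfl
theorem gv5 : g 5 = e 0 * e 2 := rfl
theorem gv6 : g 6 = e 1 * e 2 := rfl
theorem gv7 : g 7 = e 0 * (e 1 * e 2) := rfl
theorem gv8 : g 8 = e 3 := rfl
theorem gv9 : g 9 = e 0 * e 3 := rfl
theorem gv10 : g 10 = e 1 * e 3 := rfl
theorem gv11 : g 11 = e 0 * (e 1 * e 3) := rfl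
theorem gv12 : g 12 = e 2 * e 3 := rfl
theorem gv13 : g 13 = e 0 * (e 2 * e 3) := rfl
theorem gv14 : g 14 = e 1 * (e 2 * e 3) := rfl
theorem gv15 : g 15 = e 0 * (e 1 * (e 2 * e 3)) := rfl

noncomputable def N : Submodule ℝ Cl := Submodule.span ℝ (Set.range g)

theorem memN (a : Fin 16) : g a ∈ N := Submodule.subset_span ⟨a, rfl⟩

theorem emul (i : Fin 4) (a : Fin 16) : e i * g a ∈ N := by
  fin_cases i <;> fin_cases a
  · show e 0 * g 0 ∈ N
    simp only [gv0, sw10', sw20', sw21', sw30', sw31', sw32', sw10, sw20, sw21, sw30, sw31, sw32, sq0, sq1, sq2, sq3, sq0', sq1', sq2', sq3', mul_one, one_mul, mul_neg, neg_mul, neg_neg]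
    exact Submodule.subset_span ⟨1, gv1⟩
  · show e 0 * g 1 ∈ N
    simp only [gv1, sw10', sw20', sw21', sw30', sw31', sw32', sw10, sw20, sw21, sw30, sw31, sw32, sq0, sq1, sq2, sq3, sq0', sq1', sq2', sq3', mul_one, one_mul, mul_neg, neg_mul, neg_neg]
    exact Submodule.subset_span ⟨0, gv0⟩
  · show e 0 * g 2 ∈ N
    rw [gv2]
    exact Submodule.subset_span ⟨3, gv3⟩
  · show e 0 * g 3 ∈ N
    simp only [gv3, sw10', sw20', sw21', sw30', sw31', sw32', sw10, sw20, sw21, sw30, sw31, sw32, sq0, sq1, sq2, sq3, sq0', sq1', sq2', sq3', mul_one, one_mul, mul_neg, neg_mul, neg_neg]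
    exact Submodule.subset_span ⟨2, gv2⟩
  · show e 0 * g 4 ∈ N
    rw [gv4]
    exact Submodule.subset_span ⟨5, gv5⟩
  · show e 0 * g 5 ∈ N
    simp only [gv5, sw10', sw20', sw21', sw30', sw31', sw32', sw10, sw20, sw21, sw30, sw31, sw32, sq0, sq1, sq2, sq3, sq0', sq1', sq2', sq3', mul_one, one_mul, mul_neg, neg_mul, neg_neg]
    exact Submodule.subset_span ⟨4, gv4⟩
  · show e 0 * g 6 ∈ N
    rw [gv6]
    exact Submodule.subset_span ⟨7, gv7⟩
  · show e 0 * g 7 ∈ N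
    simp only [gv7, sw10', sw20', sw21', sw30', sw31', sw32', sw10, sw20, sw21, sw30, sw31, sw32, sq0, sq1, sq2, sq3, sq0', sq1', sq2', sq3', mul_one, one_mul, mul_neg, neg_mul, neg_neg]
    exact Submodule.subset_span ⟨6, gv6⟩
  · show e 0 * g 8 ∈ N
    rw [gv8]
    exact Submodule.subset_span ⟨9, gv9⟩
  · show e 0 * g 9 ∈ N
    simp only [gv9, sw10', sw20', sw21', sw30', sw31', sw32', sw10, sw20, sw21, sw30, sw31, sw32, sq0, sq1, sq2, sq3, sq0', sq1', sq2', sq3', mul_one, one_mul, mul_neg, neg_mul, neg_neg]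
    exact Submodule.subset_span ⟨8, gv8⟩
  · show e 0 * g 10 ∈ N
    rw [gv10]
    exact Submodule.subset_span ⟨11, gv11⟩
  · show e 0 * g 11 ∈ N
    simp only [gv11, sw10', sw20', sw21', sw30', sw31', sw32', sw10, sw20, sw21, sw30, sw31, sw32, sq0, sq1, sq2, sq3, sq0', sq1', sq2', sq3', mul_one, one_mul, mul_neg, neg_mul, neg_neg]
    exact Submodule.subset_span ⟨10, gv10⟩
  · show e 0 * g 12 ∈ N
    rw [gv12]
    exact Submodule.subset_span ⟨13, gv13⟩
  · show e 0 * g 13 ∈ N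
    simp only [gv13, sw10', sw20', sw21', sw30', sw31', sw32', sw10, sw20, sw21, sw30, sw31, sw32, sq0, sq1, sq2, sq3, sq0', sq1', sq2', sq3', mul_one, one_mul, mul_neg, neg_mul, neg_neg]
    exact Submodule.subset_span ⟨12, gv12⟩
  · show e 0 * g 14 ∈ N
    rw [gv14]
    exact Submodule.subset_span ⟨15, gv15⟩
  · show e 0 * g 15 ∈ N
    simp only [gv15, sw10', sw20', sw21', sw30', sw31', sw32', sw10, sw20, sw21, sw30, sw31, sw32, sq0, sq1, sq2, sq3, sq0', sq1', sq2', sq3', mul_one, one_mul, mul_neg, neg_mul, neg_neg]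
    exact Submodule.subset_span ⟨14, gv14⟩
  · show e 1 * g 0 ∈ N
    simp only [gv0, sw10', sw20', sw21', sw30', sw31', sw32', sw10, sw20, sw21, sw30, sw31, sw32, sq0, sq1, sq2, sq3, sq0', sq1', sq2', sq3', mul_one, one_mul, mul_neg, neg_mul, neg_neg]
    exact Submodule.subset_span ⟨2, gv2⟩
  · show e 1 * g 1 ∈ N
    simp only [gv1, sw10', sw20', sw21', sw30', sw31', sw32', sw10, sw20, sw21, sw30, sw31, sw32, sq0, sq1, sq2, sq3, sq0', sq1', sq2', sq3', mul_one, one_mul, mul_neg, neg_mul, neg_neg]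
    exact Submodule.neg_mem _ (Submodule.subset_span ⟨3, gv3⟩)
  · show e 1 * g 2 ∈ N
    simp only [gv2, sw10', sw20', sw21', sw30', sw31', sw32', sw10, sw20, sw21, sw30, sw31, sw32, sq0, sq1, sq2, sq3, sq0', sq1', sq2', sq3', mul_one, one_mul, mul_neg, neg_mul, neg_neg]
    exact Submodule.neg_mem _ (Submodule.subset_span ⟨0, gv0⟩)
  · show e 1 * g 3 ∈ N
    simp only [gv3, sw10', sw20', sw21', sw30', sw31', sw32', sw10, sw20, sw21, sw30, sw31, sw32, sq0, sq1, sq2, sq3, sq0', sq1', sq2', sq3', mul_one, one_mul, mul_neg, neg_mul, neg_neg]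
    exact Submodule.subset_span ⟨1, gv1⟩
  · show e 1 * g 4 ∈ N
    rw [gv4]
    exact Submodule.subset_span ⟨6, gv6⟩
  · show e 1 * g 5 ∈ N
    simp only [gv5, sw10', sw20', sw21', sw30', sw31', sw32', sw10, sw20, sw21, sw30, sw31, sw32, sq0, sq1, sq2, sq3, sq0', sq1', sq2', sq3', mul_one, one_mul, mul_neg, neg_mul, neg_neg]
    exact Submodule.neg_mem _ (Submodule.subset_span ⟨7, gv7⟩)
  · show e 1 * g 6 ∈ N
    simp only [gv6, sw10', sw20', sw21', sw30', sw31', sw32', sw10, sw20, sw21, sw30, sw31, sw32, sq0, sq1, sq2, sq3, sq0', sq1', sq2', sq3', mul_one, one_mul, mul_neg, neg_mul, neg_neg]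
    exact Submodule.neg_mem _ (Submodule.subset_span ⟨4, gv4⟩)
  · show e 1 * g 7 ∈ N
    simp only [gv7, sw10', sw20', sw21', sw30', sw31', sw32', sw10, sw20, sw21, sw30, sw31, sw32, sq0, sq1, sq2, sq3, sq0', sq1', sq2', sq3', mul_one, one_mul, mul_neg, neg_mul, neg_neg]
    exact Submodule.subset_span ⟨5, gv5⟩
  · show e 1 * g 8 ∈ N
    rw [gv8]
    exact Submodule.subset_span ⟨10, gv10⟩
  · show e 1 * g 9 ∈ N
    simp only [gv9, sw10', sw20', sw21', sw30', sw31', sw32', sw10, sw20, sw21, sw30, sw31, sw32, sq0, sq1, sq2, sq3, sq0', sq1', sq2', sq3', mul_one, one_mul, mul_neg, neg_mul, neg_neg]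
    exact Submodule.neg_mem _ (Submodule.subset_span ⟨11, gv11⟩)
  · show e 1 * g 10 ∈ N
    simp only [gv10, sw10', sw20', sw21', sw30', sw31', sw32', sw10, sw20, sw21, sw30, sw31, sw32, sq0, sq1, sq2, sq3, sq0', sq1', sq2', sq3', mul_one, one_mul, mul_neg, neg_mul, neg_neg]
    exact Submodule.neg_mem _ (Submodule.subset_span ⟨8, gv8⟩)
  · show e 1 * g 11 ∈ N
    simp only [gv11, sw10', sw20', sw21', sw30', sw31', sw32', sw10, sw20, sw21, sw30, sw31, sw32, sq0, sq1, sq2, sq3, sq0', sq1', sq2', sq3', mul_one, one_mul, mul_neg, neg_mul, neg_neg]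
    exact Submodule.subset_span ⟨9, gv9⟩
  · show e 1 * g 12 ∈ N
    rw [gv12]
    exact Submodule.subset_span ⟨14, gv14⟩
  · show e 1 * g 13 ∈ N
    simp only [gv13, sw10', sw20', sw21', sw30', sw31', sw32', sw10, sw20, sw21, sw30, sw31, sw32, sq0, sq1, sq2, sq3, sq0', sq1', sq2', sq3', mul_one, one_mul, mul_neg, neg_mul, neg_neg]
    exact Submodule.neg_mem _ (Submodule.subset_span ⟨15, gv15⟩)
  · show e 1 * g 14 ∈ N
    simp only [gv14, sw10', sw20', sw21', sw30', sw31', sw32', sw10, sw20, sw21, sw30, sw31, sw32, sq0, sq1, sq2, sq3, sq0', sq1', sq2', sq3', mul_one, one_mul, mul_neg, neg_mul, neg_neg]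
    exact Submodule.neg_mem _ (Submodule.subset_span ⟨12, gv12⟩)
  · show e 1 * g 15 ∈ N
    simp only [gv15, sw10', sw20', sw21', sw30', sw31', sw32', sw10, sw20, sw21, sw30, sw31, sw32, sq0, sq1, sq2, sq3, sq0', sq1', sq2', sq3', mul_one, one_mul, mul_neg, neg_mul, neg_neg]
    exact Submodule.subset_span ⟨13, gv13⟩
  · show e 2 * g 0 ∈ N
    simp only [gv0, sw10', sw20', sw21', sw30', sw31', sw32', sw10, sw20, sw21, sw30, sw31, sw32, sq0, sq1, sq2, sq3, sq0', sq1', sq2', sq3', mul_one, one_mul, mul_neg, neg_mul, neg_neg]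
    exact Submodule.subset_span ⟨4, gv4⟩
  · show e 2 * g 1 ∈ N
    simp only [gv1, sw10', sw20', sw21', sw30', sw31', sw32', sw10, sw20, sw21, sw30, sw31, sw32, sq0, sq1, sq2, sq3, sq0', sq1', sq2', sq3', mul_one, one_mul, mul_neg, neg_mul, neg_neg]
    exact Submodule.neg_mem _ (Submodule.subset_span ⟨5, gv5⟩)
  · show e 2 * g 2 ∈ N
    simp only [gv2, sw10', sw20', sw21', sw30', sw31', sw32', sw10, sw20, sw21, sw30, sw31, sw32, sq0, sq1, sq2, sq3, sq0', sq1', sq2', sq3', mul_one, one_mul, mul_neg, neg_mul, neg_neg]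
    exact Submodule.neg_mem _ (Submodule.subset_span ⟨6, gv6⟩)
  · show e 2 * g 3 ∈ N
    simp only [gv3, sw10', sw20', sw21', sw30', sw31', sw32', sw10, sw20, sw21, sw30, sw31, sw32, sq0, sq1, sq2, sq3, sq0', sq1', sq2', sq3', mul_one, one_mul, mul_neg, neg_mul, neg_neg]
    exact Submodule.subset_span ⟨7, gv7⟩
  · show e 2 * g 4 ∈ N
    simp only [gv4, sw10', sw20', sw21', sw30', sw31', sw32', sw10, sw20, sw21, sw30, sw31, sw32, sq0, sq1, sq2, sq3, sq0', sq1', sq2', sq3', mul_one, one_mul, mul_neg, neg_mul, neg_neg]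
    exact Submodule.neg_mem _ (Submodule.subset_span ⟨0, gv0⟩)
  · show e 2 * g 5 ∈ N
    simp only [gv5, sw10', sw20', sw21', sw30', sw31', sw32', sw10, sw20, sw21, sw30, sw31, sw32, sq0, sq1, sq2, sq3, sq0', sq1', sq2', sq3', mul_one, one_mul, mul_neg, neg_mul, neg_neg]
    exact Submodule.subset_span ⟨1, gv1⟩
  · show e 2 * g 6 ∈ N
    simp only [gv6, sw10', sw20', sw21', sw30', sw31', sw32', sw10, sw20, sw21, sw30, sw31, sw32, sq0, sq1, sq2, sq3, sq0', sq1', sq2', sq3', mul_one, one_mul, mul_neg, neg_mul, neg_neg]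
    exact Submodule.subset_span ⟨2, gv2⟩
  · show e 2 * g 7 ∈ N
    simp only [gv7, sw10', sw20', sw21', sw30', sw31', sw32', sw10, sw20, sw21, sw30, sw31, sw32, sq0, sq1, sq2, sq3, sq0', sq1', sq2', sq3', mul_one, one_mul, mul_neg, neg_mul, neg_neg]
    exact Submodule.neg_mem _ (Submodule.subset_span ⟨3, gv3⟩)
  · show e 2 * g 8 ∈ N
    rw [gv8]
    exact Submodule.subset_span ⟨12, gv12⟩
  · show e 2 * g 9 ∈ N
    simp only [gv9, sw10', sw20', sw21', sw30', sw31', sw32', sw10, sw20, sw21, sw30, sw31, sw32, sq0, sq1, sq2, sq3, sq0', sq1', sq2', sq3', mul_one, one_mul, mul_neg, neg_mul, neg_neg]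
    exact Submodule.neg_mem _ (Submodule.subset_span ⟨13, gv13⟩)
  · show e 2 * g 10 ∈ N
    simp only [gv10, sw10', sw20', sw21', sw30', sw31', sw32', sw10, sw20, sw21, sw30, sw31, sw32, sq0, sq1, sq2, sq3, sq0', sq1', sq2', sq3', mul_one, one_mul, mul_neg, neg_mul, neg_neg]
    exact Submodule.neg_mem _ (Submodule.subset_span ⟨14, gv14⟩)
  · show e 2 * g 11 ∈ N
    simp only [gv11, sw10', sw20', sw21', sw30', sw31', sw32', sw10, sw20, sw21, sw30, sw31, sw32, sq0, sq1, sq2, sq3, sq0', sq1', sq2', sq3', mul_one, one_mul, mul_neg, neg_mul, neg_neg]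
    exact Submodule.subset_span ⟨15, gv15⟩
  · show e 2 * g 12 ∈ N
    simp only [gv12, sw10', sw20', sw21', sw30', sw31', sw32', sw10, sw20, sw21, sw30, sw31, sw32, sq0, sq1, sq2, sq3, sq0', sq1', sq2', sq3', mul_one, one_mul, mul_neg, neg_mul, neg_neg]
    exact Submodule.neg_mem _ (Submodule.subset_span ⟨8, gv8⟩)
  · show e 2 * g 13 ∈ N
    simp only [gv13, sw10', sw20', sw21', sw30', sw31', sw32', sw10, sw20, sw21, sw30, sw31, sw32, sq0, sq1, sq2, sq3, sq0', sq1', sq2', sq3', mul_one, one_mul, mul_neg, neg_mul, neg_neg]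
    exact Submodule.subset_span ⟨9, gv9⟩
  · show e 2 * g 14 ∈ N
    simp only [gv14, sw10', sw20', sw21', sw30', sw31', sw32', sw10, sw20, sw21, sw30, sw31, sw32, sq0, sq1, sq2, sq3, sq0', sq1', sq2', sq3', mul_one, one_mul, mul_neg, neg_mul, neg_neg]
    exact Submodule.subset_span ⟨10, gv10⟩
  · show e 2 * g 15 ∈ N
    simp only [gv15, sw10', sw20', sw21', sw30', sw31', sw32', sw10, sw20, sw21, sw30, sw31, sw32, sq0, sq1, sq2, sq3, sq0', sq1', sq2', sq3', mul_one, one_mul, mul_neg, neg_mul, neg_neg]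
    exact Submodule.neg_mem _ (Submodule.subset_span ⟨11, gv11⟩)
  · show e 3 * g 0 ∈ N
    simp only [gv0, sw10', sw20', sw21', sw30', sw31', sw32', sw10, sw20, sw21, sw30, sw31, sw32, sq0, sq1, sq2, sq3, sq0', sq1', sq2', sq3', mul_one, one_mul, mul_neg, neg_mul, neg_neg]
    exact Submodule.subset_span ⟨8, gv8⟩
  · show e 3 * g 1 ∈ N
    simp only [gv1, sw10', sw20', sw21', sw30', sw31', sw32', sw10, sw20, sw21, sw30, sw31, sw32, sq0, sq1, sq2, sq3, sq0', sq1', sq2', sq3', mul_one, one_mul, mul_neg, neg_mul, neg_neg]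
    exact Submodule.neg_mem _ (Submodule.subset_span ⟨9, gv9⟩)
  · show e 3 * g 2 ∈ N
    simp only [gv2, sw10', sw20', sw21', sw30', sw31', sw32', sw10, sw20, sw21, sw30, sw31, sw32, sq0, sq1, sq2, sq3, sq0', sq1', sq2', sq3', mul_one, one_mul, mul_neg, neg_mul, neg_neg]
    exact Submodule.neg_mem _ (Submodule.subset_span ⟨10, gv10⟩)
  · show e 3 * g 3 ∈ N
    simp only [gv3, sw10', sw20', sw21', sw30', sw31', sw32', sw10, sw20, sw21, sw30, sw31, sw32, sq0, sq1, sq2, sq3, sq0', sq1', sq2', sq3', mul_one, one_mul, mul_neg, neg_mul, neg_neg]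
    exact Submodule.subset_span ⟨11, gv11⟩
  · show e 3 * g 4 ∈ N
    simp only [gv4, sw10', sw20', sw21', sw30', sw31', sw32', sw10, sw20, sw21, sw30, sw31, sw32, sq0, sq1, sq2, sq3, sq0', sq1', sq2', sq3', mul_one, one_mul, mul_neg, neg_mul, neg_neg]
    exact Submodule.neg_mem _ (Submodule.subset_span ⟨12, gv12⟩)
  · show e 3 * g 5 ∈ N
    simp only [gv5, sw10', sw20', sw21', sw30', sw31', sw32', sw10, sw20, sw21, sw30, sw31, sw32, sq0, sq1, sq2, sq3, sq0', sq1', sq2', sq3', mul_one, one_mul, mul_neg, neg_mul, neg_neg]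
    exact Submodule.subset_span ⟨13, gv13⟩
  · show e 3 * g 6 ∈ N
    simp only [gv6, sw10', sw20', sw21', sw30', sw31', sw32', sw10, sw20, sw21, sw30, sw31, sw32, sq0, sq1, sq2, sq3, sq0', sq1', sq2', sq3', mul_one, one_mul, mul_neg, neg_mul, neg_neg]
    exact Submodule.subset_span ⟨14, gv14⟩
  · show e 3 * g 7 ∈ N
    simp only [gv7, sw10', sw20', sw21', sw30', sw31', sw32', sw10, sw20, sw21, sw30, sw31, sw32, sq0, sq1, sq2, sq3, sq0', sq1', sq2', sq3', mul_one, one_mul, mul_neg, neg_mul, neg_neg]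
    exact Submodule.neg_mem _ (Submodule.subset_span ⟨15, gv15⟩)
  · show e 3 * g 8 ∈ N
    simp only [gv8, sw10', sw20', sw21', sw30', sw31', sw32', sw10, sw20, sw21, sw30, sw31, sw32, sq0, sq1, sq2, sq3, sq0', sq1', sq2', sq3', mul_one, one_mul, mul_neg, neg_mul, neg_neg]
    exact Submodule.neg_mem _ (Submodule.subset_span ⟨0, gv0⟩)
  · show e 3 * g 9 ∈ N
    simp only [gv9, sw10', sw20', sw21', sw30', sw31', sw32', sw10, sw20, sw21, sw30, sw31, sw32, sq0, sq1, sq2, sq3, sq0', sq1', sq2', sq3', mul_one, one_mul, mul_neg, neg_mul, neg_neg]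
    exact Submodule.subset_span ⟨1, gv1⟩
  · show e 3 * g 10 ∈ N
    simp only [gv10, sw10', sw20', sw21', sw30', sw31', sw32', sw10, sw20, sw21, sw30, sw31, sw32, sq0, sq1, sq2, sq3, sq0', sq1', sq2', sq3', mul_one, one_mul, mul_neg, neg_mul, neg_neg]
    exact Submodule.subset_span ⟨2, gv2⟩
  · show e 3 * g 11 ∈ N
    simp only [gv11, sw10', sw20', sw21', sw30', sw31', sw32', sw10, sw20, sw21, sw30, sw31, sw32, sq0, sq1, sq2, sq3, sq0', sq1', sq2', sq3', mul_one, one_mul, mul_neg, neg_mul, neg_neg]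
    exact Submodule.neg_mem _ (Submodule.subset_span ⟨3, gv3⟩)
  · show e 3 * g 12 ∈ N
    simp only [gv12, sw10', sw20', sw21', sw30', sw31', sw32', sw10, sw20, sw21, sw30, sw31, sw32, sq0, sq1, sq2, sq3, sq0', sq1', sq2', sq3', mul_one, one_mul, mul_neg, neg_mul, neg_neg]
    exact Submodule.subset_span ⟨4, gv4⟩
  · show e 3 * g 13 ∈ N
    simp only [gv13, sw10', sw20', sw21', sw30', sw31', sw32', sw10, sw20, sw21, sw30, sw31, sw32, sq0, sq1, sq2, sq3, sq0', sq1', sq2', sq3', mul_one, one_mul, mul_neg, neg_mul, neg_neg]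
    exact Submodule.neg_mem _ (Submodule.subset_span ⟨5, gv5⟩)
  · show e 3 * g 14 ∈ N
    simp only [gv14, sw10', sw20', sw21', sw30', sw31', sw32', sw10, sw20, sw21, sw30, sw31, sw32, sq0, sq1, sq2, sq3, sq0', sq1', sq2', sq3', mul_one, one_mul, mul_neg, neg_mul, neg_neg]
    exact Submodule.neg_mem _ (Submodule.subset_span ⟨6, gv6⟩)
  · show e 3 * g 15 ∈ N
    simp only [gv15, sw10', sw20', sw21', sw30', sw31', sw32', sw10, sw20, sw21, sw30, sw31, sw32, sq0, sq1, sq2, sq3, sq0', sq1', sq2', sq3', mul_one, one_mul, mul_neg, neg_mul, neg_neg]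
    exact Submodule.subset_span ⟨7, gv7⟩

theorem eN : ∀ (i : Fin 4) (n : Cl), n ∈ N → e i * n ∈ N := by
  intro i n hn
  induction hn using Submodule.span_induction with
  | mem x hx => obtain ⟨a, rfl⟩ := hx; exact emul i a
  | zero => rw [mul_zero]; exact N.zero_mem
  | add x y _ _ hx hy => rw [mul_add]; exact N.add_mem hx hy
  | smul r x _ hx => rw [mul_smul_comm]; exact N.smul_mem r hx

theorem sum_single (v : Fin 4 → ℝ) : (∑ i : Fin 4, v i • (Pi.single i 1 : Fin 4 → ℝ)) = v := by
  ext j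
  fin_cases j <;> simp [Fin.sum_univ_four, Pi.single_apply]

theorem N_top : N = ⊤ := by
  have h1 : (1 : Cl) ∈ N := memN 0
  have key : ∀ x : Cl, ∀ n ∈ N, x * n ∈ N := by
    intro x
    induction x using CliffordAlgebra.induction with
    | algebraMap r => intro n hn; rw [← Algebra.smul_def]; exact N.smul_mem r hn
    | ι v =>
      intro n hn
      have hv : ι Q13 v = ∑ i : Fin 4, v i • e i := by
        conv_lhs => rw [← sum_single v]
        rw [_root_.map_sum]
        simp_rw [_root_.map_smul, e_def]
      rw [hv, Finset.sum_mul]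
      exact Submodule.sum_mem _ fun i _ => by
        rw [smul_mul_assoc]; exact N.smul_mem _ (eN i n hn)
    | mul x y hx hy => intro n hn; rw [mul_assoc]; exact hx _ (hy _ hn)
    | add x y hx hy => intro n hn; rw [add_mul]; exact N.add_mem (hx _ hn) (hy _ hn)
  rw [eq_top_iff]
  intro x _
  have := key x 1 h1
  rwa [mul_one] at this

/-! ### the sixteen gamma-products as explicit matrices -/

def W0 : Matrix (Fin 4) (Fin 4) ℂ :=
  !![(1:ℂ), 0, 0, 0;
      0, 1, 0, 0;
      0, 0, 1, 0;
      0, 0, 0, 1]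
def W1 : Matrix (Fin 4) (Fin 4) ℂ :=
  !![(1:ℂ), 0, 0, 0;
      0, 1, 0, 0;
      0, 0, -1, 0;
      0, 0, 0, -1]
def W2 : Matrix (Fin 4) (Fin 4) ℂ :=
  !![(0:ℂ), 0, 0, 1;
      0, 0, 1, 0;
      0, -1, 0, 0;
      -1, 0, 0, 0]
def W3 : Matrix (Fin 4) (Fin 4) ℂ :=
  !![(0:ℂ), 0, 0, 1;
      0, 0, 1, 0;
      0, 1, 0, 0;
      1, 0, 0, 0]
def W4 : Matrix (Fin 4) (Fin 4) ℂ :=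
  !![(0:ℂ), 0, 0, -I;
      0, 0, I, 0;
      0, I, 0, 0;
      -I, 0, 0, 0]
def W5 : Matrix (Fin 4) (Fin 4) ℂ :=
  !![(0:ℂ), 0, 0, -I;
      0, 0, I, 0;
      0, -I, 0, 0;
      I, 0, 0, 0]
def W6 : Matrix (Fin 4) (Fin 4) ℂ :=
  !![(-I:ℂ), 0, 0, 0;
      0, I, 0, 0;
      0, 0, -I, 0;
      0, 0, 0, I]
def W7 : Matrix (Fin 4) (Fin 4) ℂ :=
  !![(-I:ℂ), 0, 0, 0;
      0, I, 0, 0;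
      0, 0, I, 0;
      0, 0, 0, -I]
def W8 : Matrix (Fin 4) (Fin 4) ℂ :=
  !![(0:ℂ), 0, 1, 0;
      0, 0, 0, -1;
      -1, 0, 0, 0;
      0, 1, 0, 0]
def W9 : Matrix (Fin 4) (Fin 4) ℂ :=
  !![(0:ℂ), 0, 1, 0;
      0, 0, 0, -1;
      1, 0, 0, 0;
      0, -1, 0, 0]
def W10 : Matrix (Fin 4) (Fin 4) ℂ :=
  !![(0:ℂ), 1, 0, 0;
      -1, 0, 0, 0;
      0, 0, 0, 1;
      0, 0, -1, 0]
def W11 : Matrix (Fin 4) (Fin 4) ℂ :=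
  !![(0:ℂ), 1, 0, 0;
      -1, 0, 0, 0;
      0, 0, 0, -1;
      0, 0, 1, 0]
def W12 : Matrix (Fin 4) (Fin 4) ℂ :=
  !![(0:ℂ), -I, 0, 0;
      -I, 0, 0, 0;
      0, 0, 0, -I;
      0, 0, -I, 0]
def W13 : Matrix (Fin 4) (Fin 4) ℂ :=
  !![(0:ℂ), -I, 0, 0;
      -I, 0, 0, 0;
      0, 0, 0, I;
      0, 0, I, 0]
def W14 : Matrix (Fin 4) (Fin 4) ℂ :=
  !![(0:ℂ), 0, -I, 0;
      0, 0, 0, -I;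
      I, 0, 0, 0;
      0, I, 0, 0]
def W15 : Matrix (Fin 4) (Fin 4) ℂ :=
  !![(0:ℂ), 0, -I, 0;
      0, 0, 0, -I;
      -I, 0, 0, 0;
      0, -I, 0, 0]

noncomputable def Mf : Fin 16 → Matrix (Fin 4) (Fin 4) ℂ := ![W0, W1, W2, W3, W4, W5, W6, W7, W8, W9, W10, W11, W12, W13, W14, W15]

theorem Wval0 : Mf 0 = W0 := rfl
theorem Wval1 : Mf 1 = W1 := rfl
theorem Wval2 : Mf 2 = W2 := rfl
theorem Wval3 : Mf 3 = W3 := rfl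
theorem Wval4 : Mf 4 = W4 := rfl
theorem Wval5 : Mf 5 = W5 := rfl
theorem Wval6 : Mf 6 = W6 := rfl
theorem Wval7 : Mf 7 = W7 := rfl
theorem Wval8 : Mf 8 = W8 := rfl
theorem Wval9 : Mf 9 = W9 := rfl
theorem Wval10 : Mf 10 = W10 := rfl
theorem Wval11 : Mf 11 = W11 := rfl
theorem Wval12 : Mf 12 = W12 := rfl
theorem Wval13 : Mf 13 = W13 := rfl
theorem Wval14 : Mf 14 = W14 := rfl
theorem Wval15 : Mf 15 = W15 := rfl

theorem Wmul3 : W1 * W2 = W3 := by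
  ext i j
  fin_cases i <;> fin_cases j <;> simp [Matrix.mul_apply, Fin.sum_univ_four, Matrix.vecHead, Matrix.vecTail, Complex.I_mul_I, W0, W1, W2, W3, W4, W5, W6, W7, W8, W9, W10, W11, W12, W13, W14, W15]
theorem Wmul5 : W1 * W4 = W5 := by
  ext i j
  fin_cases i <;> fin_cases j <;> simp [Matrix.mul_apply, Fin.sum_univ_four, Matrix.vecHead, Matrix.vecTail, Complex.I_mul_I, W0, W1, W2, W3, W4, W5, W6, W7, W8, W9, W10, W11, W12, W13, W14, W15]
theorem Wmul6 : W2 * W4 = W6 := by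
  ext i j
  fin_cases i <;> fin_cases j <;> simp [Matrix.mul_apply, Fin.sum_univ_four, Matrix.vecHead, Matrix.vecTail, Complex.I_mul_I, W0, W1, W2, W3, W4, W5, W6, W7, W8, W9, W10, W11, W12, W13, W14, W15]
theorem Wmul7 : W1 * W6 = W7 := by
  ext i j
  fin_cases i <;> fin_cases j <;> simp [Matrix.mul_apply, Fin.sum_univ_four, Matrix.vecHead, Matrix.vecTail, Complex.I_mul_I, W0, W1, W2, W3, W4, W5, W6, W7, W8, W9, W10, W11, W12, W13, W14, W15]
theorem Wmul9 : W1 * W8 = W9 := by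
  ext i j
  fin_cases i <;> fin_cases j <;> simp [Matrix.mul_apply, Fin.sum_univ_four, Matrix.vecHead, Matrix.vecTail, Complex.I_mul_I, W0, W1, W2, W3, W4, W5, W6, W7, W8, W9, W10, W11, W12, W13, W14, W15]
theorem Wmul10 : W2 * W8 = W10 := by
  ext i j
  fin_cases i <;> fin_cases j <;> simp [Matrix.mul_apply, Fin.sum_univ_four, Matrix.vecHead, Matrix.vecTail, Complex.I_mul_I, W0, W1, W2, W3, W4, W5, W6, W7, W8, W9, W10, W11, W12, W13, W14, W15]
theorem Wmul11 : W1 * W10 = W11 := by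
  ext i j
  fin_cases i <;> fin_cases j <;> simp [Matrix.mul_apply, Fin.sum_univ_four, Matrix.vecHead, Matrix.vecTail, Complex.I_mul_I, W0, W1, W2, W3, W4, W5, W6, W7, W8, W9, W10, W11, W12, W13, W14, W15]
theorem Wmul12 : W4 * W8 = W12 := by
  ext i j
  fin_cases i <;> fin_cases j <;> simp [Matrix.mul_apply, Fin.sum_univ_four, Matrix.vecHead, Matrix.vecTail, Complex.I_mul_I, W0, W1, W2, W3, W4, W5, W6, W7, W8, W9, W10, W11, W12, W13, W14, W15]
theorem Wmul13 : W1 * W12 = W13 := by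
  ext i j
  fin_cases i <;> fin_cases j <;> simp [Matrix.mul_apply, Fin.sum_univ_four, Matrix.vecHead, Matrix.vecTail, Complex.I_mul_I, W0, W1, W2, W3, W4, W5, W6, W7, W8, W9, W10, W11, W12, W13, W14, W15]
theorem Wmul14 : W2 * W12 = W14 := by
  ext i j
  fin_cases i <;> fin_cases j <;> simp [Matrix.mul_apply, Fin.sum_univ_four, Matrix.vecHead, Matrix.vecTail, Complex.I_mul_I, W0, W1, W2, W3, W4, W5, W6, W7, W8, W9, W10, W11, W12, W13, W14, W15]
theorem Wmul15 : W1 * W14 = W15 := by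
  ext i j
  fin_cases i <;> fin_cases j <;> simp [Matrix.mul_apply, Fin.sum_univ_four, Matrix.vecHead, Matrix.vecTail, Complex.I_mul_I, W0, W1, W2, W3, W4, W5, W6, W7, W8, W9, W10, W11, W12, W13, W14, W15]

theorem ψe0 : ψ (e 0) = W1 := by
  rw [ψ, e_def, CliffordAlgebra.lift_ι_apply]
  ext a b
  fin_cases a <;> fin_cases b <;>
    simp [Lmap, Pi.single_apply, Matrix.vecHead, Matrix.vecTail, W1]
theorem ψe1 : ψ (e 1) = W2 := by
  rw [ψ, e_def, CliffordAlgebra.lift_ι_apply]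
  ext a b
  fin_cases a <;> fin_cases b <;>
    simp [Lmap, Pi.single_apply, Matrix.vecHead, Matrix.vecTail, W2]
theorem ψe2 : ψ (e 2) = W4 := by
  rw [ψ, e_def, CliffordAlgebra.lift_ι_apply]
  ext a b
  fin_cases a <;> fin_cases b <;>
    simp [Lmap, Pi.single_apply, Matrix.vecHead, Matrix.vecTail, W4]
theorem ψe3 : ψ (e 3) = W8 := by
  rw [ψ, e_def, CliffordAlgebra.lift_ι_apply]
  ext a b
  fin_cases a <;> fin_cases b <;>
    simp [Lmap, Pi.single_apply, Matrix.vecHead, Matrix.vecTail, W8]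

theorem ψg0 : ψ (g 0) = W0 := by
  rw [gv0, _root_.map_one]
  ext i j
  fin_cases i <;> fin_cases j <;> simp [W0, Matrix.one_apply, Matrix.vecHead, Matrix.vecTail]
theorem ψg1 : ψ (g 1) = W1 := by rw [gv1]; exact ψe0
theorem ψg2 : ψ (g 2) = W2 := by rw [gv2]; exact ψe1
theorem ψg3 : ψ (g 3) = W3 := by
  rw [gv3, ← gv2, _root_.map_mul, ψe0, ψg2, Wmul3]
theorem ψg4 : ψ (g 4) = W4 := by rw [gv4]; exact ψe2
theorem ψg5 : ψ (g 5) = W5 := by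
  rw [gv5, ← gv4, _root_.map_mul, ψe0, ψg4, Wmul5]
theorem ψg6 : ψ (g 6) = W6 := by
  rw [gv6, ← gv4, _root_.map_mul, ψe1, ψg4, Wmul6]
theorem ψg7 : ψ (g 7) = W7 := by
  rw [gv7, ← gv6, _root_.map_mul, ψe0, ψg6, Wmul7]
theorem ψg8 : ψ (g 8) = W8 := by rw [gv8]; exact ψe3
theorem ψg9 : ψ (g 9) = W9 := by
  rw [gv9, ← gv8, _root_.map_mul, ψe0, ψg8, Wmul9]
theorem ψg10 : ψ (g 10) = W10 := by
  rw [gv10, ← gv8, _root_.map_mul, ψe1, ψg8, Wmul10]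
theorem ψg11 : ψ (g 11) = W11 := by
  rw [gv11, ← gv10, _root_.map_mul, ψe0, ψg10, Wmul11]
theorem ψg12 : ψ (g 12) = W12 := by
  rw [gv12, ← gv8, _root_.map_mul, ψe2, ψg8, Wmul12]
theorem ψg13 : ψ (g 13) = W13 := by
  rw [gv13, ← gv12, _root_.map_mul, ψe0, ψg12, Wmul13]
theorem ψg14 : ψ (g 14) = W14 := by
  rw [gv14, ← gv12, _root_.map_mul, ψe1, ψg12, Wmul14]
theorem ψg15 : ψ (g 15) = W15 := by
  rw [gv15, ← gv14, _root_.map_mul, ψe0, ψg14, Wmul15]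

theorem ψg (a : Fin 16) : ψ (g a) = Mf a := by
  fin_cases a
  · exact ψg0.trans Wval0.symm
  · exact ψg1.trans Wval1.symm
  · exact ψg2.trans Wval2.symm
  · exact ψg3.trans Wval3.symm
  · exact ψg4.trans Wval4.symm
  · exact ψg5.trans Wval5.symm
  · exact ψg6.trans Wval6.symm
  · exact ψg7.trans Wval7.symm
  · exact ψg8.trans Wval8.symm
  · exact ψg9.trans Wval9.symm
  · exact ψg10.trans Wval10.symm
  · exact ψg11.trans Wval11.symm
  · exact ψg12.trans Wval12.symm
  · exact ψg13.trans Wval13.symm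
  · exact ψg14.trans Wval14.symm
  · exact ψg15.trans Wval15.symm

/-! ### the gamma-products span the matrix algebra -/

noncomputable def SM : Submodule ℂ (Matrix (Fin 4) (Fin 4) ℂ) := Submodule.span ℂ (Set.range Mf)

theorem memW0 : W0 ∈ SM := Submodule.subset_span ⟨0, Wval0⟩
theorem memW1 : W1 ∈ SM := Submodule.subset_span ⟨1, Wval1⟩
theorem memW2 : W2 ∈ SM := Submodule.subset_span ⟨2, Wval2⟩
theorem memW3 : W3 ∈ SM := Submodule.subset_span ⟨3, Wval3⟩
theorem memW4 : W4 ∈ SM := Submodule.subset_span ⟨4, Wval4⟩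
theorem memW5 : W5 ∈ SM := Submodule.subset_span ⟨5, Wval5⟩
theorem memW6 : W6 ∈ SM := Submodule.subset_span ⟨6, Wval6⟩
theorem memW7 : W7 ∈ SM := Submodule.subset_span ⟨7, Wval7⟩
theorem memW8 : W8 ∈ SM := Submodule.subset_span ⟨8, Wval8⟩
theorem memW9 : W9 ∈ SM := Submodule.subset_span ⟨9, Wval9⟩
theorem memW10 : W10 ∈ SM := Submodule.subset_span ⟨10, Wval10⟩
theorem memW11 : W11 ∈ SM := Submodule.subset_span ⟨11, Wval11⟩
theorem memW12 : W12 ∈ SM := Submodule.subset_span ⟨12, Wval12⟩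
theorem memW13 : W13 ∈ SM := Submodule.subset_span ⟨13, Wval13⟩
theorem memW14 : W14 ∈ SM := Submodule.subset_span ⟨14, Wval14⟩
theorem memW15 : W15 ∈ SM := Submodule.subset_span ⟨15, Wval15⟩

theorem hE00 : Matrix.single (0 : Fin 4) (0 : Fin 4) (1:ℂ) ∈ SM := by
  have h : Matrix.single (0 : Fin 4) (0 : Fin 4) (1:ℂ) = (1/4 : ℂ) • W0 + (1/4 : ℂ) • W1 + (I/4 : ℂ) • W6 + (I/4 : ℂ) • W7 := by
    ext a b
    fin_cases a <;> fin_cases b <;>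
      simp [Matrix.single, Matrix.smul_apply, Matrix.vecHead, Matrix.vecTail, smul_eq_mul, W0, W1, W6, W7] <;> ring_nf <;> simp [Complex.I_sq] <;> ring
  rw [h]
  exact add_mem (add_mem (add_mem (Submodule.smul_mem _ _ memW0) (Submodule.smul_mem _ _ memW1)) (Submodule.smul_mem _ _ memW6)) (Submodule.smul_mem _ _ memW7)
theorem hE01 : Matrix.single (0 : Fin 4) (1 : Fin 4) (1:ℂ) ∈ SM := by
  have h : Matrix.single (0 : Fin 4) (1 : Fin 4) (1:ℂ) = (1/4 : ℂ) • W10 + (1/4 : ℂ) • W11 + (I/4 : ℂ) • W12 + (I/4 : ℂ) • W13 := by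
    ext a b
    fin_cases a <;> fin_cases b <;>
      simp [Matrix.single, Matrix.smul_apply, Matrix.vecHead, Matrix.vecTail, smul_eq_mul, W10, W11, W12, W13] <;> ring_nf <;> simp [Complex.I_sq] <;> ring
  rw [h]
  exact add_mem (add_mem (add_mem (Submodule.smul_mem _ _ memW10) (Submodule.smul_mem _ _ memW11)) (Submodule.smul_mem _ _ memW12)) (Submodule.smul_mem _ _ memW13)
theorem hE02 : Matrix.single (0 : Fin 4) (2 : Fin 4) (1:ℂ) ∈ SM := by
  have h : Matrix.single (0 : Fin 4) (2 : Fin 4) (1:ℂ) = (1/4 : ℂ) • W8 + (1/4 : ℂ) • W9 + (I/4 : ℂ) • W14 + (I/4 : ℂ) • W15 := by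
    ext a b
    fin_cases a <;> fin_cases b <;>
      simp [Matrix.single, Matrix.smul_apply, Matrix.vecHead, Matrix.vecTail, smul_eq_mul, W8, W9, W14, W15] <;> ring_nf <;> simp [Complex.I_sq] <;> ring
  rw [h]
  exact add_mem (add_mem (add_mem (Submodule.smul_mem _ _ memW8) (Submodule.smul_mem _ _ memW9)) (Submodule.smul_mem _ _ memW14)) (Submodule.smul_mem _ _ memW15)
theorem hE03 : Matrix.single (0 : Fin 4) (3 : Fin 4) (1:ℂ) ∈ SM := by
  have h : Matrix.single (0 : Fin 4) (3 : Fin 4) (1:ℂ) = (1/4 : ℂ) • W2 + (1/4 : ℂ) • W3 + (I/4 : ℂ) • W4 + (I/4 : ℂ) • W5 := by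
    ext a b
    fin_cases a <;> fin_cases b <;>
      simp [Matrix.single, Matrix.smul_apply, Matrix.vecHead, Matrix.vecTail, smul_eq_mul, W2, W3, W4, W5] <;> ring_nf <;> simp [Complex.I_sq] <;> ring
  rw [h]
  exact add_mem (add_mem (add_mem (Submodule.smul_mem _ _ memW2) (Submodule.smul_mem _ _ memW3)) (Submodule.smul_mem _ _ memW4)) (Submodule.smul_mem _ _ memW5)
theorem hE10 : Matrix.single (1 : Fin 4) (0 : Fin 4) (1:ℂ) ∈ SM := by
  have h : Matrix.single (1 : Fin 4) (0 : Fin 4) (1:ℂ) = (-(1/4) : ℂ) • W10 + (-(1/4) : ℂ) • W11 + (I/4 : ℂ) • W12 + (I/4 : ℂ) • W13 := by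
    ext a b
    fin_cases a <;> fin_cases b <;>
      simp [Matrix.single, Matrix.smul_apply, Matrix.vecHead, Matrix.vecTail, smul_eq_mul, W10, W11, W12, W13] <;> ring_nf <;> simp [Complex.I_sq] <;> ring
  rw [h]
  exact add_mem (add_mem (add_mem (Submodule.smul_mem _ _ memW10) (Submodule.smul_mem _ _ memW11)) (Submodule.smul_mem _ _ memW12)) (Submodule.smul_mem _ _ memW13)
theorem hE11 : Matrix.single (1 : Fin 4) (1 : Fin 4) (1:ℂ) ∈ SM := by
  have h : Matrix.single (1 : Fin 4) (1 : Fin 4) (1:ℂ) = (1/4 : ℂ) • W0 + (1/4 : ℂ) • W1 + (-(I/4) : ℂ) • W6 + (-(I/4) : ℂ) • W7 := by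
    ext a b
    fin_cases a <;> fin_cases b <;>
      simp [Matrix.single, Matrix.smul_apply, Matrix.vecHead, Matrix.vecTail, smul_eq_mul, W0, W1, W6, W7] <;> ring_nf <;> simp [Complex.I_sq] <;> ring
  rw [h]
  exact add_mem (add_mem (add_mem (Submodule.smul_mem _ _ memW0) (Submodule.smul_mem _ _ memW1)) (Submodule.smul_mem _ _ memW6)) (Submodule.smul_mem _ _ memW7)
theorem hE12 : Matrix.single (1 : Fin 4) (2 : Fin 4) (1:ℂ) ∈ SM := by
  have h : Matrix.single (1 : Fin 4) (2 : Fin 4) (1:ℂ) = (1/4 : ℂ) • W2 + (1/4 : ℂ) • W3 + (-(I/4) : ℂ) • W4 + (-(I/4) : ℂ) • W5 := by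
    ext a b
    fin_cases a <;> fin_cases b <;>
      simp [Matrix.single, Matrix.smul_apply, Matrix.vecHead, Matrix.vecTail, smul_eq_mul, W2, W3, W4, W5] <;> ring_nf <;> simp [Complex.I_sq] <;> ring
  rw [h]
  exact add_mem (add_mem (add_mem (Submodule.smul_mem _ _ memW2) (Submodule.smul_mem _ _ memW3)) (Submodule.smul_mem _ _ memW4)) (Submodule.smul_mem _ _ memW5)
theorem hE13 : Matrix.single (1 : Fin 4) (3 : Fin 4) (1:ℂ) ∈ SM := by
  have h : Matrix.single (1 : Fin 4) (3 : Fin 4) (1:ℂ) = (-(1/4) : ℂ) • W8 + (-(1/4) : ℂ) • W9 + (I/4 : ℂ) • W14 + (I/4 : ℂ) • W15 := by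
    ext a b
    fin_cases a <;> fin_cases b <;>
      simp [Matrix.single, Matrix.smul_apply, Matrix.vecHead, Matrix.vecTail, smul_eq_mul, W8, W9, W14, W15] <;> ring_nf <;> simp [Complex.I_sq] <;> ring
  rw [h]
  exact add_mem (add_mem (add_mem (Submodule.smul_mem _ _ memW8) (Submodule.smul_mem _ _ memW9)) (Submodule.smul_mem _ _ memW14)) (Submodule.smul_mem _ _ memW15)
theorem hE20 : Matrix.single (2 : Fin 4) (0 : Fin 4) (1:ℂ) ∈ SM := by
  have h : Matrix.single (2 : Fin 4) (0 : Fin 4) (1:ℂ) = (-(1/4) : ℂ) • W8 + (1/4 : ℂ) • W9 + (-(I/4) : ℂ) • W14 + (I/4 : ℂ) • W15 := by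
    ext a b
    fin_cases a <;> fin_cases b <;>
      simp [Matrix.single, Matrix.smul_apply, Matrix.vecHead, Matrix.vecTail, smul_eq_mul, W8, W9, W14, W15] <;> ring_nf <;> simp [Complex.I_sq] <;> ring
  rw [h]
  exact add_mem (add_mem (add_mem (Submodule.smul_mem _ _ memW8) (Submodule.smul_mem _ _ memW9)) (Submodule.smul_mem _ _ memW14)) (Submodule.smul_mem _ _ memW15)
theorem hE21 : Matrix.single (2 : Fin 4) (1 : Fin 4) (1:ℂ) ∈ SM := by
  have h : Matrix.single (2 : Fin 4) (1 : Fin 4) (1:ℂ) = (-(1/4) : ℂ) • W2 + (1/4 : ℂ) • W3 + (-(I/4) : ℂ) • W4 + (I/4 : ℂ) • W5 := by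
    ext a b
    fin_cases a <;> fin_cases b <;>
      simp [Matrix.single, Matrix.smul_apply, Matrix.vecHead, Matrix.vecTail, smul_eq_mul, W2, W3, W4, W5] <;> ring_nf <;> simp [Complex.I_sq] <;> ring
  rw [h]
  exact add_mem (add_mem (add_mem (Submodule.smul_mem _ _ memW2) (Submodule.smul_mem _ _ memW3)) (Submodule.smul_mem _ _ memW4)) (Submodule.smul_mem _ _ memW5)
theorem hE22 : Matrix.single (2 : Fin 4) (2 : Fin 4) (1:ℂ) ∈ SM := by
  have h : Matrix.single (2 : Fin 4) (2 : Fin 4) (1:ℂ) = (1/4 : ℂ) • W0 + (-(1/4) : ℂ) • W1 + (I/4 : ℂ) • W6 + (-(I/4) : ℂ) • W7 := by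
    ext a b
    fin_cases a <;> fin_cases b <;>
      simp [Matrix.single, Matrix.smul_apply, Matrix.vecHead, Matrix.vecTail, smul_eq_mul, W0, W1, W6, W7] <;> ring_nf <;> simp [Complex.I_sq] <;> ring
  rw [h]
  exact add_mem (add_mem (add_mem (Submodule.smul_mem _ _ memW0) (Submodule.smul_mem _ _ memW1)) (Submodule.smul_mem _ _ memW6)) (Submodule.smul_mem _ _ memW7)
theorem hE23 : Matrix.single (2 : Fin 4) (3 : Fin 4) (1:ℂ) ∈ SM := by
  have h : Matrix.single (2 : Fin 4) (3 : Fin 4) (1:ℂ) = (1/4 : ℂ) • W10 + (-(1/4) : ℂ) • W11 + (I/4 : ℂ) • W12 + (-(I/4) : ℂ) • W13 := by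
    ext a b
    fin_cases a <;> fin_cases b <;>
      simp [Matrix.single, Matrix.smul_apply, Matrix.vecHead, Matrix.vecTail, smul_eq_mul, W10, W11, W12, W13] <;> ring_nf <;> simp [Complex.I_sq] <;> ring
  rw [h]
  exact add_mem (add_mem (add_mem (Submodule.smul_mem _ _ memW10) (Submodule.smul_mem _ _ memW11)) (Submodule.smul_mem _ _ memW12)) (Submodule.smul_mem _ _ memW13)
theorem hE30 : Matrix.single (3 : Fin 4) (0 : Fin 4) (1:ℂ) ∈ SM := by
  have h : Matrix.single (3 : Fin 4) (0 : Fin 4) (1:ℂ) = (-(1/4) : ℂ) • W2 + (1/4 : ℂ) • W3 + (I/4 : ℂ) • W4 + (-(I/4) : ℂ) • W5 := by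
    ext a b
    fin_cases a <;> fin_cases b <;>
      simp [Matrix.single, Matrix.smul_apply, Matrix.vecHead, Matrix.vecTail, smul_eq_mul, W2, W3, W4, W5] <;> ring_nf <;> simp [Complex.I_sq] <;> ring
  rw [h]
  exact add_mem (add_mem (add_mem (Submodule.smul_mem _ _ memW2) (Submodule.smul_mem _ _ memW3)) (Submodule.smul_mem _ _ memW4)) (Submodule.smul_mem _ _ memW5)
theorem hE31 : Matrix.single (3 : Fin 4) (1 : Fin 4) (1:ℂ) ∈ SM := by
  have h : Matrix.single (3 : Fin 4) (1 : Fin 4) (1:ℂ) = (1/4 : ℂ) • W8 + (-(1/4) : ℂ) • W9 + (-(I/4) : ℂ) • W14 + (I/4 : ℂ) • W15 := by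
    ext a b
    fin_cases a <;> fin_cases b <;>
      simp [Matrix.single, Matrix.smul_apply, Matrix.vecHead, Matrix.vecTail, smul_eq_mul, W8, W9, W14, W15] <;> ring_nf <;> simp [Complex.I_sq] <;> ring
  rw [h]
  exact add_mem (add_mem (add_mem (Submodule.smul_mem _ _ memW8) (Submodule.smul_mem _ _ memW9)) (Submodule.smul_mem _ _ memW14)) (Submodule.smul_mem _ _ memW15)
theorem hE32 : Matrix.single (3 : Fin 4) (2 : Fin 4) (1:ℂ) ∈ SM := by
  have h : Matrix.single (3 : Fin 4) (2 : Fin 4) (1:ℂ) = (-(1/4) : ℂ) • W10 + (1/4 : ℂ) • W11 + (I/4 : ℂ) • W12 + (-(I/4) : ℂ) • W13 := by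
    ext a b
    fin_cases a <;> fin_cases b <;>
      simp [Matrix.single, Matrix.smul_apply, Matrix.vecHead, Matrix.vecTail, smul_eq_mul, W10, W11, W12, W13] <;> ring_nf <;> simp [Complex.I_sq] <;> ring
  rw [h]
  exact add_mem (add_mem (add_mem (Submodule.smul_mem _ _ memW10) (Submodule.smul_mem _ _ memW11)) (Submodule.smul_mem _ _ memW12)) (Submodule.smul_mem _ _ memW13)
theorem hE33 : Matrix.single (3 : Fin 4) (3 : Fin 4) (1:ℂ) ∈ SM := by
  have h : Matrix.single (3 : Fin 4) (3 : Fin 4) (1:ℂ) = (1/4 : ℂ) • W0 + (-(1/4) : ℂ) • W1 + (-(I/4) : ℂ) • W6 + (I/4 : ℂ) • W7 := by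
    ext a b
    fin_cases a <;> fin_cases b <;>
      simp [Matrix.single, Matrix.smul_apply, Matrix.vecHead, Matrix.vecTail, smul_eq_mul, W0, W1, W6, W7] <;> ring_nf <;> simp [Complex.I_sq] <;> ring
  rw [h]
  exact add_mem (add_mem (add_mem (Submodule.smul_mem _ _ memW0) (Submodule.smul_mem _ _ memW1)) (Submodule.smul_mem _ _ memW6)) (Submodule.smul_mem _ _ memW7)

theorem SM_top : SM = ⊤ := by
  rw [eq_top_iff]
  intro x _
  rw [matrix_eq_sum_single x]
  refine Submodule.sum_mem _ fun i _ => Submodule.sum_mem _ fun j _ => ?_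
  have h : Matrix.single i j (x i j) = x i j • Matrix.single i j (1:ℂ) := by
    rw [smul_single, smul_eq_mul, mul_one]
  rw [h]
  refine Submodule.smul_mem _ _ ?_
  fin_cases i <;> fin_cases j
  · exact hE00
  · exact hE01
  · exact hE02
  · exact hE03
  · exact hE10
  · exact hE11
  · exact hE12
  · exact hE13
  · exact hE20
  · exact hE21
  · exact hE22
  · exact hE23
  · exact hE30
  · exact hE31
  · exact hE32
  · exact hE33

/-! ### the algebra map from the complexification -/

noncomputable def F : (ℂ ⊗[ℝ] Cl) →ₐ[ℂ] Matrix (Fin 4) (Fin 4) ℂ :=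
  Algebra.TensorProduct.lift (Algebra.ofId ℂ _) ψ fun z x => Algebra.commutes z (ψ x)

theorem F_tmul (z : ℂ) (x : Cl) : F (z ⊗ₜ[ℝ] x) = z • ψ x := by
  exact (Algebra.TensorProduct.lift_tmul _ _ _ z x).trans (Algebra.smul_def z (ψ x)).symm

noncomputable def bf : Fin 16 → (ℂ ⊗[ℝ] Cl) := fun a => (1 : ℂ) ⊗ₜ[ℝ] g a

theorem F_bf (a : Fin 16) : F (bf a) = Mf a := by
  rw [bf, F_tmul, one_smul, ψg]

theorem bf_span : Submodule.span ℂ (Set.range bf) = ⊤ := by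
  rw [eq_top_iff]
  intro x _
  induction x using TensorProduct.induction_on with
  | zero => exact Submodule.zero_mem _
  | tmul z m =>
    have h1 : ∀ m : Cl, (1 : ℂ) ⊗ₜ[ℝ] m ∈ Submodule.span ℂ (Set.range bf) := by
      intro m
      have hm : m ∈ N := N_top ▸ Submodule.mem_top
      induction hm using Submodule.span_induction with
      | mem y hy => obtain ⟨a, rfl⟩ := hy; exact Submodule.subset_span ⟨a, rfl⟩
      | zero => rw [TensorProduct.tmul_zero]; exact Submodule.zero_mem _
      | add y z _ _ hy hz => rw [TensorProduct.tmul_add]; exact Submodule.add_mem _ hy hz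
      | smul r y _ hy =>
        rw [TensorProduct.tmul_smul, ← algebraMap_smul ℂ r ((1:ℂ) ⊗ₜ[ℝ] y)]
        exact Submodule.smul_mem _ _ hy
    have h2 : z ⊗ₜ[ℝ] m = z • ((1:ℂ) ⊗ₜ[ℝ] m) := by
      rw [TensorProduct.smul_tmul', smul_eq_mul, mul_one]
    rw [h2]
    exact Submodule.smul_mem _ _ (h1 m)
  | add x y hx hy => exact Submodule.add_mem _ (hx Submodule.mem_top) (hy Submodule.mem_top)

theorem Mf_li : LinearIndependent ℂ Mf := by
  refine linearIndependent_of_top_le_span_of_card_eq_finrank ?_ ?_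
  · rw [← SM, SM_top]
  · simp [Module.finrank_matrix]

theorem F_bij : Function.Bijective F := by
  constructor
  · intro x y hxy
    have hmem : x - y ∈ Submodule.span ℂ (Set.range bf) := bf_span ▸ Submodule.mem_top
    obtain ⟨c, hc⟩ := Submodule.mem_span_range_iff_exists_fun (R := ℂ) |>.mp hmem
    have h0 : ∑ a, c a • Mf a = 0 := by
      have hF0 : F (x - y) = 0 := by rw [map_sub, hxy, sub_self]
      rw [← hc] at hF0
      simpa [_root_.map_sum, F_bf] using hF0
    have hc0 : ∀ a, c a = 0 := Fintype.linearIndependent_iff.mp Mf_li c h0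
    have hxy0 : x - y = 0 := by rw [← hc]; simp [hc0]
    exact sub_eq_zero.mp hxy0
  · intro y
    have hy : y ∈ SM := SM_top ▸ Submodule.mem_top
    induction hy using Submodule.span_induction with
    | mem z hz => obtain ⟨a, rfl⟩ := hz; exact ⟨bf a, F_bf a⟩
    | zero => exact ⟨0, map_zero F⟩
    | add u v _ _ hu hv =>
      obtain ⟨p, rfl⟩ := hu; obtain ⟨q, rfl⟩ := hv
      exact ⟨p + q, map_add F p q⟩
    | smul c u _ hu =>
      obtain ⟨p, rfl⟩ := hu
      exact ⟨c • p, map_smul F c p⟩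

end DiracAux

/-- The Dirac algebra is the complexification of the spacetime algebra. -/
theorem complexified_spacetime_algebra_iso_dirac :
    Nonempty ((ℂ ⊗[ℝ] CliffordAlgebra Q13) ≃ₐ[ℂ] Matrix (Fin 4) (Fin 4) ℂ) :=
  ⟨AlgEquiv.ofBijective DiracAux.F DiracAux.F_bij⟩
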